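/- Let q be a prime power and let u, v be real exponents with 1 ≤ u ≤ 2, u ≤ v < ∞ and (u − 1) v ≤ u (i.e. v ≤ u/(u − 1), with no upper restriction when u = 1). Then for every F : H_1(F_q) → ℂ one has ‖M_{H1} F‖_{ℓ^v(P^1(F_q))} ≤ 2√2 · q^{1/v} · ‖F‖_{ℓ^u(H_1(F_q))}. -/

import Mathlib

/-!
`K` plays the role of the finite field `F_q` with `q = Fintype.card K` elements
(the cardinality of a finite field is automatically a prime power).
The Heisenberg group `H₁(F_q)` is identified with `K × K × K`.
The projective line `P¹(F_q)` is identified with `Option K`, where `some m`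
corresponds to the direction class `[1 : m]` and `none` to `[0 : 1]`
(every class has a unique such normal form).
-/

noncomputable section

open Finset

/-- Two-term weighted Hölder inequality on a finset. -/
lemma holder2 {X : Type*} (S : Finset X) (a b : X → ℝ) (ha : ∀ x ∈ S, 0 ≤ a x)
    (hb : ∀ x ∈ S, 0 ≤ b x) {θ : ℝ} (hθ0 : 0 ≤ θ) (hθ1 : θ ≤ 1) :
    ∑ x ∈ S, a x ^ (1 - θ) * b x ^ θ ≤
      (∑ x ∈ S, a x) ^ (1 - θ) * (∑ x ∈ S, b x) ^ θ := by
  rcases eq_or_lt_of_le hθ0 with h0 | h0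
  · simp only [← h0, Real.rpow_zero, sub_zero, Real.rpow_one, mul_one, le_refl]
  rcases eq_or_lt_of_le hθ1 with h1 | h1
  · simp only [h1, Real.rpow_one, sub_self, Real.rpow_zero, one_mul, le_refl]
  have hA0 : 0 ≤ ∑ x ∈ S, a x := sum_nonneg ha
  have hB0 : 0 ≤ ∑ x ∈ S, b x := sum_nonneg hb
  set A := ∑ x ∈ S, a x with hA
  set B := ∑ x ∈ S, b x with hB
  rcases hA0.eq_or_lt with hA' | hApos
  · have hz : ∀ x ∈ S, a x = 0 := (sum_eq_zero_iff_of_nonneg ha).1 hA'.symm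
    have : ∑ x ∈ S, a x ^ (1 - θ) * b x ^ θ = 0 := by
      apply sum_eq_zero
      intro x hx
      rw [hz x hx, Real.zero_rpow (by linarith), zero_mul]
    rw [this]
    positivity
  rcases hB0.eq_or_lt with hB' | hBpos
  · have hz : ∀ x ∈ S, b x = 0 := (sum_eq_zero_iff_of_nonneg hb).1 hB'.symm
    have : ∑ x ∈ S, a x ^ (1 - θ) * b x ^ θ = 0 := by
      apply sum_eq_zero
      intro x hx
      rw [hz x hx, Real.zero_rpow (by linarith), mul_zero]
    rw [this]
    positivity
  have key : ∀ x ∈ S, a x ^ (1 - θ) * b x ^ θ ≤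
      A ^ (1 - θ) * B ^ θ * ((1 - θ) * (a x / A) + θ * (b x / B)) := by
    intro x hx
    have hgm := Real.geom_mean_le_arith_mean2_weighted (by linarith : (0:ℝ) ≤ 1 - θ) hθ0
      (div_nonneg (ha x hx) hA0) (div_nonneg (hb x hx) hB0) (by ring)
    have heq : a x ^ (1 - θ) * b x ^ θ =
        A ^ (1 - θ) * B ^ θ * ((a x / A) ^ (1 - θ) * (b x / B) ^ θ) := by
      rw [Real.div_rpow (ha x hx) hA0, Real.div_rpow (hb x hx) hB0]
      have h1 : A ^ (1 - θ) ≠ 0 := by positivity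
      have h2 : B ^ θ ≠ 0 := by positivity
      field_simp
    rw [heq]
    exact mul_le_mul_of_nonneg_left hgm (by positivity)
  calc ∑ x ∈ S, a x ^ (1 - θ) * b x ^ θ
      ≤ ∑ x ∈ S, A ^ (1 - θ) * B ^ θ * ((1 - θ) * (a x / A) + θ * (b x / B)) :=
        sum_le_sum key
    _ = A ^ (1 - θ) * B ^ θ * ((1 - θ) * (A / A) + θ * (B / B)) := by
        rw [← mul_sum]
        congr 1
        rw [sum_add_distrib, ← mul_sum, ← mul_sum, ← sum_div, ← sum_div]
    _ = A ^ (1 - θ) * B ^ θ := by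
        rw [div_self hApos.ne', div_self hBpos.ne']
        ring

/-- Representative direction vector of a projective class. -/
def dirVec {K : Type*} [Field K] : Option K → K × K
  | some m => (1, m)
  | none => (0, 1)

/-- The point of the horizontal line through `p = (x₀, y₀, t₀)` with direction
vector `v = (a, b)` corresponding to the parameter `s`, namely
`(x₀ + s a, y₀ + s b, t₀ + s (x₀ b - y₀ a))`. -/
def hPoint {K : Type*} [Field K] (p : K × K × K) (v : K × K) (s : K) : K × K × K :=
  (p.1 + s * v.1, p.2.1 + s * v.2, p.2.2 + s * (p.1 * v.2 - p.2.1 * v.1))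

/-- Sum of `|F|` along the horizontal line through `p` with direction vector `v`. -/
def lineSumH1 {K : Type*} [Field K] [Fintype K] (Fc : K × K × K → ℂ)
    (p : K × K × K) (v : K × K) : ℝ :=
  ∑ s : K, ‖Fc (hPoint p v s)‖

/-- The horizontal Kakeya maximal function `M_{H₁} F` on `P¹(F_q) ≃ Option K`:
the maximum over all base points `p` of the sum of `|F|` along the horizontal
line through `p` in the given direction. -/
def MH1 {K : Type*} [Field K] [Fintype K] (Fc : K × K × K → ℂ) (d : Option K) : ℝ :=
  Finset.univ.sup' ⟨((0 : K), (0 : K), (0 : K)), Finset.mem_univ _⟩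
    fun p => lineSumH1 Fc p (dirVec d)

/-- `ℓ^r` norm of a complex-valued function on a finite set. -/
def lpNormC {X : Type*} [Fintype X] (r : ℝ) (g : X → ℂ) : ℝ :=
  (∑ x, ‖g x‖ ^ r) ^ (1 / r)

/-- `ℓ^r` norm of a real-valued function on a finite set. -/
def lpNormR {X : Type*} [Fintype X] (r : ℝ) (g : X → ℝ) : ℝ :=
  (∑ x, |g x| ^ r) ^ (1 / r)

set_option maxHeartbeats 2000000 in
/-- For `1 ≤ u ≤ 2`, `u ≤ v < ∞` with `(u - 1) v ≤ u`
(i.e. `v ≤ u/(u-1)`, no upper restriction if `u = 1`),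
`‖M_{H₁} F‖_{ℓ^v(P¹(F_q))} ≤ 2√2 · q^{1/v} · ‖F‖_{ℓ^u(H₁(F_q))}`. -/
theorem stmt_8 {K : Type*} [Field K] [Fintype K] (u v : ℝ) (hu1 : 1 ≤ u)
    (hu2 : u ≤ 2) (huv : u ≤ v) (hvu : (u - 1) * v ≤ u) (Fc : K × K × K → ℂ) :
    lpNormR v (MH1 Fc) ≤
      2 * Real.sqrt 2 * (Fintype.card K : ℝ) ^ (1 / v) * lpNormC u Fc := by

  classical
  have hq1 : 1 ≤ Fintype.card K := Fintype.card_pos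
  have hqR : (1:ℝ) ≤ (Fintype.card K : ℝ) := by exact_mod_cast hq1
  have hu0 : (0:ℝ) < u := by linarith
  have hv1 : (1:ℝ) ≤ v := le_trans hu1 huv
  have hv0 : (0:ℝ) < v := by linarith
  set q : ℝ := (Fintype.card K : ℝ) with hqdef
  have hq0 : (0:ℝ) < q := by rw [hqdef]; linarith
  set f : K × K × K → ℝ := fun z => ‖Fc z‖ with hfdef
  have hf : ∀ z, 0 ≤ f z := fun z => norm_nonneg _
  set θ : ℝ := 2 * (u - 1) / u with hθdef
  have hθ0 : 0 ≤ θ := div_nonneg (by linarith) hu0.le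
  have hθ1 : θ ≤ 1 := by rw [hθdef, div_le_one hu0]; linarith
  set sθ : ℝ := (u - 1) * v / u with hsdef
  have hs0 : 0 ≤ sθ := div_nonneg (mul_nonneg (by linarith) (by linarith)) hu0.le
  have hs1 : sθ ≤ 1 := by rw [hsdef, div_le_one hu0]; linarith
  have hθv : θ * v = 2 * sθ := by rw [hθdef, hsdef]; field_simp
  -- choose maximizing base points
  have hex : ∀ d : Option K, ∃ p : K × K × K, MH1 Fc d = lineSumH1 Fc p (dirVec d) := by
    intro d
    obtain ⟨p, -, hp⟩ := Finset.exists_mem_eq_sup'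
      (⟨((0 : K), (0 : K), (0 : K)), Finset.mem_univ _⟩ :
        (Finset.univ : Finset (K × K × K)).Nonempty)
      (fun p => lineSumH1 Fc p (dirVec d))
    exact ⟨p, hp⟩
  choose P hP using hex
  set L : Option K → Finset (K × K × K) :=
    fun d => Finset.univ.image (fun t => hPoint (P d) (dirVec d) t) with hLdef
  have hinj : ∀ (p : K × K × K) (d : Option K),
      Function.Injective (fun t => hPoint p (dirVec d) t) := by
    intro p d t₁ t₂ hte
    rcases d with _ | m
    · have := congrArg (fun z => z.2.1) hte
      simpa [hPoint, dirVec] using this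
    · have := congrArg (fun z => z.1) hte
      simpa [hPoint, dirVec] using this
  have hLcard : ∀ d, ((L d).card : ℝ) = q := by
    intro d
    simp only [hLdef]
    rw [Finset.card_image_of_injective _ (hinj _ _), Finset.card_univ, hqdef]
  have hMT : ∀ d, MH1 Fc d = ∑ z ∈ L d, f z := by
    intro d
    rw [hP d]
    simp only [hLdef]
    rw [Finset.sum_image (fun x _ y _ hxy => hinj (P d) d hxy)]
    rfl
  -- two maximizing lines with distinct directions meet in at most one point
  have hint : ∀ d d' : Option K, d ≠ d' → ((L d ∩ L d').card : ℝ) ≤ 1 := by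
    intro d d' hne
    have : (L d ∩ L d').card ≤ 1 := by
      rw [Finset.card_le_one]
      intro x hx y hy
      rw [Finset.mem_inter] at hx hy
      obtain ⟨hx1, hx2⟩ := hx
      obtain ⟨hy1, hy2⟩ := hy
      simp only [hLdef, Finset.mem_image, Finset.mem_univ, true_and] at hx1 hx2 hy1 hy2
      obtain ⟨s₁, hs₁⟩ := hx1
      obtain ⟨t₁, ht₁⟩ := hx2
      obtain ⟨s₂, hs₂⟩ := hy1
      obtain ⟨t₂, ht₂⟩ := hy2
      have key : s₁ = s₂ → x = y := by
        intro hss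
        rw [← hs₁, ← hs₂, hss]
      apply key
      rcases d with _ | m <;> rcases d' with _ | m'
      · exact absurd rfl hne
      · -- d = none, d' = some m'
        have e1 := congrArg (fun z => z.1) (hs₁.trans ht₁.symm)
        have e2 := congrArg (fun z => z.2.1) (hs₁.trans ht₁.symm)
        have e1' := congrArg (fun z => z.1) (hs₂.trans ht₂.symm)
        have e2' := congrArg (fun z => z.2.1) (hs₂.trans ht₂.symm)
        simp only [hPoint, dirVec] at e1 e2 e1' e2'
        linear_combination (e2 - e2') - m' * (e1 - e1')
      · -- d = some m, d' = none
        have e1 := congrArg (fun z => z.1) (hs₁.trans ht₁.symm)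
        have e1' := congrArg (fun z => z.1) (hs₂.trans ht₂.symm)
        simp only [hPoint, dirVec] at e1 e1'
        linear_combination e1 - e1'
      · -- both some
        have hmm' : m ≠ m' := fun hc => hne (by rw [hc])
        have e1 := congrArg (fun z => z.1) (hs₁.trans ht₁.symm)
        have e2 := congrArg (fun z => z.2.1) (hs₁.trans ht₁.symm)
        have e1' := congrArg (fun z => z.1) (hs₂.trans ht₂.symm)
        have e2' := congrArg (fun z => z.2.1) (hs₂.trans ht₂.symm)
        simp only [hPoint, dirVec] at e1 e2 e1' e2'
        have h3 : (s₁ - s₂) * (m - m') = 0 := by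
          linear_combination (e2 - e2') - m' * (e1 - e1')
        rcases mul_eq_zero.1 h3 with hc | hc
        · exact sub_eq_zero.1 hc
        · exact absurd (sub_eq_zero.1 hc) hmm'
    exact_mod_cast this
  -- the L² estimate
  have key2 : ∀ h : K × K × K → ℝ, (∀ z, 0 ≤ h z) →
      ∑ d : Option K, (∑ z ∈ L d, h z) ^ 2 ≤ 2 * q * ∑ z : K × K × K, h z ^ 2 := by
    intro h hh
    set a : Option K → ℝ := fun d => ∑ z ∈ L d, h z with hadef
    have han : ∀ d, 0 ≤ a d := fun d => Finset.sum_nonneg fun z _ => hh z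
    set χ : Option K → (K × K × K) → ℝ := fun d z => if z ∈ L d then 1 else 0 with hχdef
    set G : (K × K × K) → ℝ := fun z => ∑ d, a d * χ d z with hGdef
    set S : ℝ := ∑ d : Option K, a d ^ 2 with hSdef
    have hS0 : 0 ≤ S := Finset.sum_nonneg fun d _ => sq_nonneg _
    have hiter : ∀ (d : Option K) (w : (K × K × K) → ℝ),
        ∑ z : K × K × K, χ d z * w z = ∑ z ∈ L d, w z := by
      intro d w
      simp only [hχdef, ite_mul, one_mul, zero_mul]
      rw [Finset.sum_ite_mem, Finset.univ_inter]
    have hexp : S = ∑ z : K × K × K, h z * G z := by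
      calc S = ∑ d : Option K, ∑ z : K × K × K, χ d z * (a d * h z) := by
              apply Finset.sum_congr rfl
              intro d _
              rw [hiter d (fun z => a d * h z), ← Finset.mul_sum, sq]
        _ = ∑ z : K × K × K, ∑ d : Option K, χ d z * (a d * h z) := Finset.sum_comm
        _ = ∑ z : K × K × K, h z * G z := by
              apply Finset.sum_congr rfl
              intro z _
              rw [hGdef, Finset.mul_sum]
              apply Finset.sum_congr rfl
              intro d _
              ring
    have hGsq : ∑ z : K × K × K, G z ^ 2 =
        ∑ d : Option K, ∑ d' : Option K, a d * a d' * ((L d ∩ L d').card : ℝ) := by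
      have : ∀ z : K × K × K, G z ^ 2 =
          ∑ d : Option K, ∑ d' : Option K, (a d * a d') * (χ d z * χ d' z) := by
        intro z
        rw [hGdef, sq, Finset.sum_mul_sum]
        apply Finset.sum_congr rfl
        intro d _
        apply Finset.sum_congr rfl
        intro d' _
        ring
      rw [Finset.sum_congr rfl (fun z _ => this z)]
      rw [Finset.sum_comm]
      apply Finset.sum_congr rfl
      intro d _
      rw [Finset.sum_comm]
      apply Finset.sum_congr rfl
      intro d' _
      rw [← Finset.mul_sum]
      congr 1
      have : ∀ z : K × K × K, χ d z * χ d' z = if z ∈ L d ∩ L d' then (1:ℝ) else 0 := by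
        intro z
        simp only [hχdef, Finset.mem_inter, ite_mul, one_mul, zero_mul]
        by_cases h1 : z ∈ L d <;> by_cases h2 : z ∈ L d' <;> simp [h1, h2]
      rw [Finset.sum_congr rfl (fun z _ => this z), Finset.sum_ite_mem, Finset.univ_inter,
        Finset.sum_const, nsmul_eq_mul, mul_one]
    have hq1R : (1:ℝ) ≤ q := hqR
    have hGb : ∑ z : K × K × K, G z ^ 2 ≤ 2 * q * S := by
      rw [hGsq]
      have hterm : ∀ d d' : Option K,
          a d * a d' * ((L d ∩ L d').card : ℝ) ≤
            a d * a d' + (if d = d' then (q - 1) * a d ^ 2 else 0) := by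
        intro d d'
        by_cases hdd : d = d'
        · subst hdd
          rw [if_pos rfl, Finset.inter_self, hLcard]
          have : a d * a d * q = a d * a d + (q - 1) * a d ^ 2 := by ring
          linarith [this.le]
        · rw [if_neg hdd, add_zero]
          calc a d * a d' * ((L d ∩ L d').card : ℝ)
              ≤ a d * a d' * 1 :=
                mul_le_mul_of_nonneg_left (hint d d' hdd) (mul_nonneg (han d) (han d'))
            _ = a d * a d' := mul_one _
      calc ∑ d : Option K, ∑ d' : Option K, a d * a d' * ((L d ∩ L d').card : ℝ)
          ≤ ∑ d : Option K, ∑ d' : Option K,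
              (a d * a d' + (if d = d' then (q - 1) * a d ^ 2 else 0)) :=
            Finset.sum_le_sum fun d _ => Finset.sum_le_sum fun d' _ => hterm d d'
        _ = (∑ d : Option K, a d) ^ 2 + (q - 1) * S := by
            simp only [Finset.sum_add_distrib]
            congr 1
            · rw [sq, Finset.sum_mul_sum]
            · rw [hSdef, Finset.mul_sum]
              apply Finset.sum_congr rfl
              intro d _
              simp [Finset.sum_ite_eq]
        _ ≤ (q + 1) * S + (q - 1) * S := by
            have hcs : (∑ d : Option K, a d) ^ 2 ≤ (q + 1) * S := by
              have := sq_sum_le_card_mul_sum_sq (s := (Finset.univ : Finset (Option K)))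
                (f := a)
              have hcard : ((Finset.univ : Finset (Option K)).card : ℝ) = q + 1 := by
                rw [Finset.card_univ, Fintype.card_option, hqdef]
                push_cast
                ring
              calc (∑ d : Option K, a d) ^ 2
                  ≤ ((Finset.univ : Finset (Option K)).card : ℝ) * ∑ d : Option K, a d ^ 2 := by
                    exact_mod_cast this
                _ = (q + 1) * S := by rw [hcard, hSdef]
            linarith
        _ = 2 * q * S := by ring
    have hCS2 : S ^ 2 ≤ (∑ z : K × K × K, h z ^ 2) * (∑ z : K × K × K, G z ^ 2) := by
      rw [hexp]
      exact Finset.sum_mul_sq_le_sq_mul_sq Finset.univ h G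
    rcases hS0.eq_or_lt with hS' | hSpos
    · rw [← hS']
      positivity
    · have hh2 : 0 ≤ ∑ z : K × K × K, h z ^ 2 := Finset.sum_nonneg fun z _ => sq_nonneg _
      have : S * S ≤ (2 * q * ∑ z : K × K × K, h z ^ 2) * S := by
        calc S * S = S ^ 2 := (sq S).symm
          _ ≤ (∑ z : K × K × K, h z ^ 2) * (∑ z : K × K × K, G z ^ 2) := hCS2
          _ ≤ (∑ z : K × K × K, h z ^ 2) * (2 * q * S) :=
              mul_le_mul_of_nonneg_left hGb hh2
          _ = (2 * q * ∑ z : K × K × K, h z ^ 2) * S := by ring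
      exact le_of_mul_le_mul_right this hSpos
  -- splitting f = g^(1-θ) h^θ
  set Au : ℝ := ∑ z : K × K × K, f z ^ u with hAudef
  have hAu0 : 0 ≤ Au := Finset.sum_nonneg fun z _ => Real.rpow_nonneg (hf z) u
  set g : K × K × K → ℝ := fun z => f z ^ u with hgdef
  set h : K × K × K → ℝ := fun z => f z ^ (u / 2) with hhdef
  have hg0 : ∀ z, 0 ≤ g z := fun z => Real.rpow_nonneg (hf z) _
  have hh0 : ∀ z, 0 ≤ h z := fun z => Real.rpow_nonneg (hf z) _
  have hexp1 : u * (1 - θ) + u / 2 * θ = 1 := by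
    rw [hθdef]
    field_simp
    ring
  have hfactor : ∀ z, f z = g z ^ (1 - θ) * h z ^ θ := by
    intro z
    simp only [hgdef, hhdef]
    rw [← Real.rpow_mul (hf z), ← Real.rpow_mul (hf z),
      ← Real.rpow_add' (hf z) (by rw [hexp1]; exact one_ne_zero), hexp1, Real.rpow_one]
  have hTf_le : ∀ d, (∑ z ∈ L d, f z) ≤ (∑ z ∈ L d, g z) ^ (1 - θ) * (∑ z ∈ L d, h z) ^ θ := by
    intro d
    calc ∑ z ∈ L d, f z = ∑ z ∈ L d, g z ^ (1 - θ) * h z ^ θ :=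
          Finset.sum_congr rfl fun z _ => hfactor z
      _ ≤ _ := holder2 (L d) g h (fun z _ => hg0 z) (fun z _ => hh0 z) hθ0 hθ1
  have hTg_le : ∀ d, ∑ z ∈ L d, g z ≤ Au := fun d =>
    Finset.sum_le_sum_of_subset_of_nonneg (Finset.subset_univ _) fun z _ _ => hg0 z
  have hTh2 : ∑ z : K × K × K, h z ^ 2 = Au := by
    rw [hAudef]
    apply Finset.sum_congr rfl
    intro z _
    simp only [hhdef]
    rw [sq, ← Real.rpow_add' (hf z) (by simpa using hu0.ne')]
    norm_num
    rfl
  have hTh_nn : ∀ d, 0 ≤ ∑ z ∈ L d, h z := fun d => Finset.sum_nonneg fun z _ => hh0 z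
  -- per-direction bound raised to power v
  have hstep : ∀ d, (∑ z ∈ L d, f z) ^ v ≤
      Au ^ ((1 - θ) * v) * (∑ z ∈ L d, h z) ^ (θ * v) := by
    intro d
    have hTf0 : 0 ≤ ∑ z ∈ L d, f z := Finset.sum_nonneg fun z _ => hf z
    have hTg0 : 0 ≤ ∑ z ∈ L d, g z := Finset.sum_nonneg fun z _ => hg0 z
    have h1 : (∑ z ∈ L d, f z) ^ v ≤
        ((∑ z ∈ L d, g z) ^ (1 - θ) * (∑ z ∈ L d, h z) ^ θ) ^ v :=
      Real.rpow_le_rpow hTf0 (hTf_le d) hv0.le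
    have h2 : ((∑ z ∈ L d, g z) ^ (1 - θ) * (∑ z ∈ L d, h z) ^ θ) ^ v =
        (∑ z ∈ L d, g z) ^ ((1 - θ) * v) * (∑ z ∈ L d, h z) ^ (θ * v) := by
      rw [Real.mul_rpow (Real.rpow_nonneg hTg0 _) (Real.rpow_nonneg (hTh_nn d) _),
        Real.rpow_mul hTg0, Real.rpow_mul (hTh_nn d)]
    have h3 : (∑ z ∈ L d, g z) ^ ((1 - θ) * v) ≤ Au ^ ((1 - θ) * v) :=
      Real.rpow_le_rpow hTg0 (hTg_le d) (mul_nonneg (by linarith) hv0.le)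
    calc (∑ z ∈ L d, f z) ^ v ≤ (∑ z ∈ L d, g z) ^ ((1 - θ) * v) * (∑ z ∈ L d, h z) ^ (θ * v) := by
          rw [← h2]; exact h1
      _ ≤ Au ^ ((1 - θ) * v) * (∑ z ∈ L d, h z) ^ (θ * v) :=
          mul_le_mul_of_nonneg_right h3 (Real.rpow_nonneg (hTh_nn d) _)
  -- Hölder over directions
  have hdir : ∑ d : Option K, (∑ z ∈ L d, h z) ^ (θ * v) ≤
      (q + 1) ^ (1 - sθ) * (∑ d : Option K, (∑ z ∈ L d, h z) ^ 2) ^ sθ := by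
    have h1 : ∀ d : Option K, (∑ z ∈ L d, h z) ^ (θ * v) =
        (1 : ℝ) ^ (1 - sθ) * ((∑ z ∈ L d, h z) ^ 2) ^ sθ := by
      intro d
      rw [Real.one_rpow, one_mul, ← Real.rpow_natCast (∑ z ∈ L d, h z) 2,
        ← Real.rpow_mul (hTh_nn d), hθv]
      norm_num
    calc ∑ d : Option K, (∑ z ∈ L d, h z) ^ (θ * v)
        = ∑ d : Option K, (1 : ℝ) ^ (1 - sθ) * ((∑ z ∈ L d, h z) ^ 2) ^ sθ :=
          Finset.sum_congr rfl fun d _ => h1 d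
      _ ≤ (∑ _d : Option K, (1 : ℝ)) ^ (1 - sθ) *
            (∑ d : Option K, (∑ z ∈ L d, h z) ^ 2) ^ sθ :=
          holder2 Finset.univ _ _ (fun _ _ => zero_le_one) (fun d _ => sq_nonneg _) hs0 hs1
      _ = (q + 1) ^ (1 - sθ) * (∑ d : Option K, (∑ z ∈ L d, h z) ^ 2) ^ sθ := by
          congr 2
          rw [Finset.sum_const, Finset.card_univ, Fintype.card_option, nsmul_eq_mul, mul_one,
            hqdef]
          push_cast
          ring
  -- assemble the summed estimate
  have hexp2 : (1 - θ) * v + sθ = v / u := by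
    rw [hθdef, hsdef]
    field_simp
    ring
  have hfinal : ∑ d : Option K, (∑ z ∈ L d, f z) ^ v ≤
      (2 * Real.sqrt 2) ^ v * q * Au ^ (v / u) := by
    have hkey := key2 h hh0
    rw [hTh2] at hkey
    have hsum2 : (∑ d : Option K, (∑ z ∈ L d, h z) ^ 2) ^ sθ ≤ (2 * q * Au) ^ sθ :=
      Real.rpow_le_rpow (Finset.sum_nonneg fun d _ => sq_nonneg _) hkey hs0
    have hAunn : 0 ≤ Au ^ ((1 - θ) * v) := Real.rpow_nonneg hAu0 _
    calc ∑ d : Option K, (∑ z ∈ L d, f z) ^ v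
        ≤ ∑ d : Option K, Au ^ ((1 - θ) * v) * (∑ z ∈ L d, h z) ^ (θ * v) :=
          Finset.sum_le_sum fun d _ => hstep d
      _ = Au ^ ((1 - θ) * v) * ∑ d : Option K, (∑ z ∈ L d, h z) ^ (θ * v) := by
          rw [Finset.mul_sum]
      _ ≤ Au ^ ((1 - θ) * v) *
            ((q + 1) ^ (1 - sθ) * (∑ d : Option K, (∑ z ∈ L d, h z) ^ 2) ^ sθ) :=
          mul_le_mul_of_nonneg_left hdir hAunn
      _ ≤ Au ^ ((1 - θ) * v) * ((2 * q) ^ (1 - sθ) * (2 * q * Au) ^ sθ) := by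
          apply mul_le_mul_of_nonneg_left _ hAunn
          apply mul_le_mul
          · exact Real.rpow_le_rpow (by linarith) (by linarith) (by linarith)
          · exact hsum2
          · exact Real.rpow_nonneg (Finset.sum_nonneg fun d _ => sq_nonneg _) _
          · positivity
      _ = Au ^ ((1 - θ) * v) * Au ^ sθ * ((2 * q) ^ (1 - sθ) * (2 * q) ^ sθ) := by
          rw [Real.mul_rpow (by positivity) hAu0]
          ring
      _ = Au ^ (v / u) * (2 * q) := by
          rw [← Real.rpow_add' hAu0 (by rw [hexp2]; positivity), hexp2,
            ← Real.rpow_add (by positivity : (0:ℝ) < 2 * q)]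
          norm_num
      _ ≤ (2 * Real.sqrt 2) ^ v * q * Au ^ (v / u) := by
          have hsq : (1:ℝ) ≤ Real.sqrt 2 := by
            rw [show (1:ℝ) = Real.sqrt 1 from (Real.sqrt_one).symm]
            exact Real.sqrt_le_sqrt (by norm_num)
          have h2v : (2:ℝ) ≤ (2 * Real.sqrt 2) ^ v := by
            calc (2:ℝ) ≤ 2 * Real.sqrt 2 := by nlinarith
              _ = (2 * Real.sqrt 2) ^ (1:ℝ) := (Real.rpow_one _).symm
              _ ≤ (2 * Real.sqrt 2) ^ v :=
                Real.rpow_le_rpow_of_exponent_le (by nlinarith) hv1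
          have hAuv : 0 ≤ Au ^ (v / u) := Real.rpow_nonneg hAu0 _
          calc Au ^ (v / u) * (2 * q) = 2 * (q * Au ^ (v / u)) := by ring
            _ ≤ (2 * Real.sqrt 2) ^ v * (q * Au ^ (v / u)) :=
              mul_le_mul_of_nonneg_right h2v (by positivity)
            _ = (2 * Real.sqrt 2) ^ v * q * Au ^ (v / u) := by ring
  -- conclude
  have hM0 : ∀ d, 0 ≤ MH1 Fc d := by
    intro d
    rw [hMT d]
    exact Finset.sum_nonneg fun z _ => hf z
  have hLHS : lpNormR v (MH1 Fc) = (∑ d : Option K, (∑ z ∈ L d, f z) ^ v) ^ (1 / v) := by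
    rw [lpNormR]
    congr 1
    apply Finset.sum_congr rfl
    intro d _
    rw [abs_of_nonneg (hM0 d), hMT d]
  have hRHS : lpNormC u Fc = Au ^ (1 / u) := rfl
  rw [hLHS, hRHS]
  have hmono : (∑ d : Option K, (∑ z ∈ L d, f z) ^ v) ^ (1 / v) ≤
      ((2 * Real.sqrt 2) ^ v * q * Au ^ (v / u)) ^ (1 / v) :=
    Real.rpow_le_rpow
      (Finset.sum_nonneg fun d _ => Real.rpow_nonneg (Finset.sum_nonneg fun z _ => hf z) _)
      hfinal (by positivity)
  refine le_trans hmono (le_of_eq ?_)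
  have hs2 : (0:ℝ) ≤ 2 * Real.sqrt 2 := by positivity
  rw [Real.mul_rpow (by positivity) (Real.rpow_nonneg hAu0 _),
    Real.mul_rpow (by positivity) hq0.le,
    ← Real.rpow_mul hs2, ← Real.rpow_mul hAu0,
    mul_one_div_cancel hv0.ne', Real.rpow_one]
  have : v / u * (1 / v) = 1 / u := by
    field_simp
  rw [this, hqdef]
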